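/- Let A be n×m with unit-norm columns satisfying URP, x ∈ ℝⁿ, and let s⁰ be a solution of As = x with at most n/2 nonzero entries. For any solution ŝ of As = x, let α be the (⌊n/2⌋+1)-th largest absolute value among the entries of ŝ. Then ‖ŝ − s⁰‖ ≤ (M+1)·m·α, where M is the maximal left-inverse norm over submatrices of A with at most n columns. -/

import Mathlib

open Matrix Finset Filter

noncomputable def vnorm {k : ℕ} (s : Fin k → ℝ) : ℝ := Real.sqrt (∑ i, (s i)^2)

noncomputable def mnorm {p q : ℕ} (L : Matrix (Fin p) (Fin q) ℝ) : ℝ :=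
  Real.sqrt (∑ i, ∑ j, (L i j)^2)

def URP {n m : ℕ} (A : Matrix (Fin n) (Fin m) ℝ) : Prop :=
  ∀ g : Fin n → Fin m, Function.Injective g → (A.submatrix id g).det ≠ 0

def UnitCols {n m : ℕ} (A : Matrix (Fin n) (Fin m) ℝ) : Prop :=
  ∀ j, vnorm (fun i => A i j) = 1

def LeftInvBound {n m : ℕ} (A : Matrix (Fin n) (Fin m) ℝ) (M : ℝ) : Prop :=
  ∀ (k : ℕ), k ≤ n → ∀ g : Fin k → Fin m, Function.Injective g →
    ∃ L : Matrix (Fin k) (Fin n) ℝ, L * A.submatrix id g = 1 ∧ mnorm L ≤ M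

section helpers
lemma vnorm_nonneg {k : ℕ} (s : Fin k → ℝ) : 0 ≤ vnorm s := Real.sqrt_nonneg _

lemma vnorm_eq_norm {k : ℕ} (s : Fin k → ℝ) :
    vnorm s = ‖(EuclideanSpace.equiv (Fin k) ℝ).symm s‖ := by
  rw [EuclideanSpace.norm_eq]
  simp [vnorm, Real.norm_eq_abs, sq_abs]

lemma vnorm_neg {k : ℕ} (s : Fin k → ℝ) : vnorm (-s) = vnorm s := by
  simp [vnorm, neg_sq]

lemma vnorm_add_le {k : ℕ} (a b : Fin k → ℝ) : vnorm (a + b) ≤ vnorm a + vnorm b := by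
  rw [vnorm_eq_norm, vnorm_eq_norm, vnorm_eq_norm, map_add]
  exact norm_add_le _ _

lemma vnorm_le_sum_abs {k : ℕ} (s : Fin k → ℝ) : vnorm s ≤ ∑ i, |s i| := by
  have h : ∑ i, (s i)^2 ≤ (∑ i, |s i|)^2 := by
    calc ∑ i, (s i)^2 = ∑ i, |s i|^2 := by simp [sq_abs]
    _ ≤ (∑ i, |s i|)^2 := Finset.sum_sq_le_sq_sum_of_nonneg (fun i _ => abs_nonneg _)
  calc vnorm s ≤ Real.sqrt ((∑ i, |s i|)^2) := Real.sqrt_le_sqrt h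
  _ = ∑ i, |s i| := Real.sqrt_sq (Finset.sum_nonneg fun i _ => abs_nonneg _)

lemma vnorm_mulVec_le {n m : ℕ} (A : Matrix (Fin n) (Fin m) ℝ) (w : Fin m → ℝ) :
    vnorm (A.mulVec w) ≤ ∑ j, |w j| * vnorm (fun i => A i j) := by
  have h : A.mulVec w = ∑ j, w j • (fun i => A i j) := by
    ext i
    simp [Matrix.mulVec, dotProduct, mul_comm]
  rw [h, vnorm_eq_norm, map_sum]
  calc ‖∑ j, (EuclideanSpace.equiv (Fin n) ℝ).symm (w j • fun i => A i j)‖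
      ≤ ∑ j, ‖(EuclideanSpace.equiv (Fin n) ℝ).symm (w j • fun i => A i j)‖ :=
        norm_sum_le _ _
    _ = ∑ j, |w j| * vnorm (fun i => A i j) := by
        refine Finset.sum_congr rfl fun j _ => ?_
        rw [_root_.map_smul, norm_smul, Real.norm_eq_abs, vnorm_eq_norm]

lemma vnorm_matvec_le {p q : ℕ} (L : Matrix (Fin p) (Fin q) ℝ) (y : Fin q → ℝ) :
    vnorm (L.mulVec y) ≤ mnorm L * vnorm y := by
  have h : ∑ i, (L.mulVec y i)^2 ≤ (∑ i, ∑ j, (L i j)^2) * (∑ j, (y j)^2) := by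
    rw [Finset.sum_mul]
    refine Finset.sum_le_sum fun i _ => ?_
    exact Finset.sum_mul_sq_le_sq_mul_sq Finset.univ (fun j => L i j) y
  calc vnorm (L.mulVec y) ≤ Real.sqrt ((∑ i, ∑ j, (L i j)^2) * (∑ j, (y j)^2)) :=
        Real.sqrt_le_sqrt h
    _ = mnorm L * vnorm y := Real.sqrt_mul (by positivity) _


lemma count_gt_le {m : ℕ} (f : Fin m → ℝ) (k : ℕ) (hk : k < m) (α : ℝ)
    (hα : α = ((List.ofFn fun i => |f i|).mergeSort (fun a b => b ≤ a)).getD k 0) :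
    (Finset.univ.filter fun i => α < |f i|).card ≤ k ∧ 0 ≤ α := by
  set l0 : List ℝ := List.ofFn fun i => |f i| with hl0
  set l : List ℝ := l0.mergeSort (fun a b => b ≤ a) with hl
  have hlen : l.length = m := by rw [hl, List.length_mergeSort, hl0, List.length_ofFn]
  have hkl : k < l.length := hlen ▸ hk
  have hget : α = l[k] := by rw [hα, List.getD_eq_getElem _ _ hkl]
  have hsort : l.Pairwise (fun a b : ℝ => b ≤ a) := by
    have := List.pairwise_mergeSort (le := fun a b : ℝ => decide (b ≤ a))
      (fun a b c h1 h2 => by simp at h1 h2 ⊢; exact le_trans h2 h1)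
      (fun a b => by simpa using le_total b a) l0
    simpa using this
  have hpg := List.pairwise_iff_get.mp hsort
  have hdrople : ∀ x ∈ l.drop k, x ≤ α := by
    intro x hx
    obtain ⟨i, hi, hix⟩ := List.mem_iff_getElem.mp hx
    rw [List.getElem_drop] at hix
    subst hix
    rcases Nat.eq_or_lt_of_le (Nat.le_add_right k i) with h | h
    · rw [hget]; exact le_of_eq (by congr 1; omega)
    · have := hpg ⟨k, hkl⟩ ⟨k + i, by simp [List.length_drop] at hi; omega⟩ h
      simpa [hget] using this
  have hcount : l.countP (fun a => decide (α < a)) ≤ k := by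
    have hsplit : l = l.take k ++ l.drop k := (List.take_append_drop k l).symm
    rw [hsplit, List.countP_append]
    have h1 : (l.take k).countP (fun a => decide (α < a)) ≤ k := by
      calc (l.take k).countP _ ≤ (l.take k).length := List.countP_le_length
      _ ≤ k := by simp [List.length_take]
    have h2 : (l.drop k).countP (fun a => decide (α < a)) = 0 := by
      rw [List.countP_eq_zero]
      intro a ha
      simpa using not_lt.mpr (hdrople a ha)
    omega
  have hperm : l0.countP (fun a => decide (α < a)) ≤ k := by
    rwa [← (List.mergeSort_perm l0 _).countP_eq]
  constructor
  · have hcard : (Finset.univ.filter fun i => α < |f i|).card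
        = l0.countP (fun a => decide (α < a)) := by
      rw [hl0, List.ofFn_eq_map, List.countP_map]
      rw [Fin.univ_def]
      simp only [Finset.filter, Finset.card, Multiset.filter_coe, Multiset.coe_card]
      rw [← List.countP_eq_length_filter]
      rfl
    omega
  · have hmem : α ∈ l0 := by
      rw [hget]
      exact (List.mergeSort_perm l0 _).mem_iff.mp (List.getElem_mem hkl)
    rw [hl0, List.mem_ofFn] at hmem
    obtain ⟨i, hi⟩ := hmem
    rw [← hi]; exact abs_nonneg _

end helpers

theorem stmt17 {n m : ℕ} (hnm : n < m) (A : Matrix (Fin n) (Fin m) ℝ)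
    (hcols : UnitCols A) (hURP : URP A) (M : ℝ) (hM : LeftInvBound A M)
    (x : Fin n → ℝ)
    (s0 : Fin m → ℝ) (hs0 : A.mulVec s0 = x)
    (hs0k : 2 * (Finset.univ.filter fun i => s0 i ≠ 0).card ≤ n)
    (shat : Fin m → ℝ) (hshat : A.mulVec shat = x)
    (α : ℝ)
    (hα : α = ((List.ofFn fun i => |shat i|).mergeSort (fun a b => b ≤ a)).getD
      (n / 2) 0) :
    vnorm (shat - s0) ≤ (M + 1) * m * α := by
  -- α facts
  have hn2m : n / 2 < m := lt_of_le_of_lt (Nat.div_le_self n 2) hnm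
  obtain ⟨hTcard, hα0⟩ := count_gt_le shat (n / 2) hn2m α hα
  -- M ≥ 0
  have hM0 : 0 ≤ M := by
    obtain ⟨L0, -, hL0⟩ := hM 0 (Nat.zero_le n) (fun i => i.elim0) (fun i => i.elim0)
    exact le_trans (Real.sqrt_nonneg _) hL0
  -- the support set
  set T : Finset (Fin m) := Finset.univ.filter fun i => α < |shat i| with hT
  set S : Finset (Fin m) := T ∪ Finset.univ.filter (fun i => s0 i ≠ 0) with hS
  have hScard : S.card ≤ n := by
    have h1 : S.card ≤ T.card + (Finset.univ.filter (fun i => s0 i ≠ 0)).card := by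
      rw [hS]; exact Finset.card_union_le _ _
    omega
  set k := S.card with hk
  set g : Fin k → Fin m := fun i => S.orderEmbOfFin rfl i with hg
  have hginj : Function.Injective g := (S.orderEmbOfFin rfl).injective
  have hgmem : ∀ j, j ∈ S ↔ ∃ i, g i = j := by
    intro j
    constructor
    · intro hj
      have : j ∈ Set.range ⇑(S.orderEmbOfFin rfl) := by
        rw [Finset.range_orderEmbOfFin]; exact hj
      exact this
    · rintro ⟨i, rfl⟩
      exact Finset.orderEmbOfFin_mem S rfl i
  have hgim : Finset.image g Finset.univ = S := by
    ext j
    simp only [Finset.mem_image, Finset.mem_univ, true_and]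
    rw [hgmem]
  obtain ⟨L, hL1, hL2⟩ := hM k hScard g hginj
  set d : Fin m → ℝ := shat - s0 with hd
  have hAd : A.mulVec d = 0 := by
    rw [hd, Matrix.mulVec_sub, hs0, hshat, sub_self]
  set u : Fin m → ℝ := fun j => if j ∈ S then d j else 0 with hu
  set w : Fin m → ℝ := fun j => if j ∈ S then 0 else shat j with hw
  have hs0S : ∀ j, j ∉ S → s0 j = 0 := by
    intro j hj
    by_contra hne
    exact hj (Finset.mem_union_right _ (by simp [hne]))
  have hduw : d = u + w := by
    funext j
    by_cases hj : j ∈ S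
    · simp [hu, hw, hj]
    · simp [hu, hw, hj, hd, hs0S j hj]
  set v : Fin k → ℝ := fun i => d (g i) with hv
  -- sum transfer
  have hsumS : ∀ F : Fin m → ℝ, ∑ j ∈ S, F j = ∑ i, F (g i) := by
    intro F
    rw [← hgim, Finset.sum_image (fun a _ b _ h => hginj h)]
  have hAuv : (A.submatrix id g).mulVec v = A.mulVec u := by
    funext i
    simp only [Matrix.mulVec, dotProduct, Matrix.submatrix_apply, id_eq]
    calc ∑ t : Fin k, A i (g t) * v t = ∑ j ∈ S, A i j * d j :=
          (hsumS fun j => A i j * d j).symm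
    _ = ∑ j ∈ Finset.univ ∩ S, A i j * d j := by rw [Finset.univ_inter]
    _ = ∑ j : Fin m, (if j ∈ S then A i j * d j else 0) := (Finset.sum_ite_mem _ _ _).symm
    _ = ∑ j : Fin m, A i j * u j := Finset.sum_congr rfl fun j _ => by
          by_cases hj : j ∈ S <;> simp [hu, hj]
  have hAuw : A.mulVec u = -(A.mulVec w) := by
    have : A.mulVec u + A.mulVec w = 0 := by
      rw [← Matrix.mulVec_add, ← hduw, hAd]
    linear_combination (norm := module) this
  have hvL : v = -(L.mulVec (A.mulVec w)) := by
    have h1 : L.mulVec ((A.submatrix id g).mulVec v) = v := by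
      rw [Matrix.mulVec_mulVec, hL1, Matrix.one_mulVec]
    rw [← h1, hAuv, hAuw, Matrix.mulVec_neg]
  -- bounds
  have hwle : ∀ j, |w j| ≤ α := by
    intro j
    by_cases hj : j ∈ S
    · simpa [hw, hj] using hα0
    · have hjT : j ∉ T := fun h => hj (Finset.mem_union_left _ h)
      simp only [hT, Finset.mem_filter, Finset.mem_univ, true_and, not_lt] at hjT
      simpa [hw, hj] using hjT
  have hsumw : ∑ j, |w j| ≤ m * α := by
    calc ∑ j, |w j| ≤ ∑ _j : Fin m, α := Finset.sum_le_sum fun j _ => hwle j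
    _ = m * α := by simp [mul_comm]
  have hAw : vnorm (A.mulVec w) ≤ m * α := by
    calc vnorm (A.mulVec w) ≤ ∑ j, |w j| * vnorm (fun i => A i j) := vnorm_mulVec_le A w
    _ = ∑ j, |w j| := Finset.sum_congr rfl fun j _ => by rw [hcols j, mul_one]
    _ ≤ m * α := hsumw
  have hvb : vnorm v ≤ M * (m * α) := by
    rw [hvL, vnorm_neg]
    calc vnorm (L.mulVec (A.mulVec w)) ≤ mnorm L * vnorm (A.mulVec w) :=
          vnorm_matvec_le L _
    _ ≤ M * (m * α) :=
          mul_le_mul hL2 hAw (vnorm_nonneg _) hM0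
  have huv : vnorm u = vnorm v := by
    unfold vnorm
    congr 1
    calc ∑ j : Fin m, (u j)^2
        = ∑ j : Fin m, (if j ∈ S then (d j)^2 else 0) := Finset.sum_congr rfl fun j _ => by
          by_cases hj : j ∈ S <;> simp [hu, hj]
    _ = ∑ j ∈ Finset.univ ∩ S, (d j)^2 := Finset.sum_ite_mem _ _ _
    _ = ∑ j ∈ S, (d j)^2 := by rw [Finset.univ_inter]
    _ = ∑ i : Fin k, (v i)^2 := hsumS fun j => (d j)^2
  have hwb : vnorm w ≤ m * α := le_trans (vnorm_le_sum_abs w) hsumw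
  calc vnorm (shat - s0) = vnorm (u + w) := by rw [← hd, hduw]
  _ ≤ vnorm u + vnorm w := vnorm_add_le u w
  _ = vnorm v + vnorm w := by rw [huv]
  _ ≤ M * (m * α) + m * α := add_le_add hvb hwb
  _ = (M + 1) * m * α := by ring
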